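/- Let r > 0, p ≥ 1, m ∈ ℕ, let E = ℝ^m with the Euclidean inner product, K a finite-dimensional real inner product space, T : E → K linear, g ∈ K, γ > 0, and 0 < ε < r. Let B = p(r−ε)^{p−1}/(2ε) + 3((r−ε)^p − r^p)/(4ε²). Then for every ω ≥ γ|B| the function v ↦ J_p^ε(v) + ω‖v‖², where J_p^ε(v) = ‖Tv − g‖² + γ ∑_{i=1}^m W_r^{p,ε}(v_i), is convex; in particular J_p^ε is ω-semi-convex. -/

import Mathlib

open Set Filter Topology


/-- The smoothed truncated power potential `W_r^{p,ε}`. -/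
noncomputable def Wpot (r p ε t : ℝ) : ℝ :=
  if |t| ≤ r - ε then |t| ^ p
  else if |t| ≤ r + ε then
    (p * (r - ε) ^ (p - 1) / (12 * ε ^ 2) +
        (p * (r - ε) ^ (p - 1) / (2 * ε) +
          3 * ((r - ε) ^ p - r ^ p) / (4 * ε ^ 2)) / (3 * ε)) *
      (|t| - (r + ε)) ^ 3 +
    (p * (r - ε) ^ (p - 1) / (2 * ε) + 3 * ((r - ε) ^ p - r ^ p) / (4 * ε ^ 2)) *
      (|t| - (r + ε)) ^ 2 + r ^ p
  else r ^ p

noncomputable def Bc (r p ε : ℝ) : ℝ :=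
  p * (r - ε) ^ (p - 1) / (2 * ε) + 3 * ((r - ε) ^ p - r ^ p) / (4 * ε ^ 2)

noncomputable def Ac (r p ε : ℝ) : ℝ :=
  p * (r - ε) ^ (p - 1) / (12 * ε ^ 2) + Bc r p ε / (3 * ε)

lemma Wpot_eq (r p ε t : ℝ) : Wpot r p ε t =
    if |t| ≤ r - ε then |t| ^ p
    else if |t| ≤ r + ε then
      Ac r p ε * (|t| - (r + ε)) ^ 3 + Bc r p ε * (|t| - (r + ε)) ^ 2 + r ^ p
    else r ^ p := rfl

section facts
variable {r p ε : ℝ}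

lemma bern (hp : 1 ≤ p) (hε0 : 0 < ε) (hεr : ε < r) :
    (r - ε) ^ p + p * (r - ε) ^ (p - 1) * ε ≤ r ^ p := by
  have hs : 0 < r - ε := by linarith
  have h : 1 + p * (ε / (r - ε)) ≤ (1 + ε / (r - ε)) ^ p :=
    one_add_mul_self_le_rpow_one_add (by have := div_nonneg hε0.le hs.le; linarith) hp
  have h2 : (1 + ε / (r - ε)) ^ p * (r - ε) ^ p = r ^ p := by
    rw [← Real.mul_rpow (by positivity) hs.le]
    congr 1; field_simp; ring
  have h3 : (1 + p * (ε / (r - ε))) * (r - ε) ^ p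
      = (r - ε) ^ p + p * (r - ε) ^ (p - 1) * ε := by
    have hsp : (r - ε) ^ p = (r - ε) ^ (p - 1) * (r - ε) := by
      rw [← Real.rpow_add_one hs.ne' (p - 1)]; ring_nf
    rw [hsp]; field_simp
  have h4 := mul_le_mul_of_nonneg_right h (Real.rpow_nonneg hs.le p)
  rw [h3, h2] at h4
  exact h4

lemma Bc_mul (hε0 : 0 < ε) : Bc r p ε * (4 * ε ^ 2)
    = p * (r - ε) ^ (p - 1) * (2 * ε) + 3 * ((r - ε) ^ p - r ^ p) := by
  have hε : (ε:ℝ) ≠ 0 := ne_of_gt hε0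
  unfold Bc; field_simp; ring

lemma Ac_mul (hε0 : 0 < ε) : Ac r p ε * (12 * ε ^ 2)
    = p * (r - ε) ^ (p - 1) + 4 * ε * Bc r p ε := by
  have hε : (ε:ℝ) ≠ 0 := ne_of_gt hε0
  unfold Ac; field_simp; ring

lemma q_nonneg (hp : 1 ≤ p) (hε0 : 0 < ε) (hεr : ε < r) :
    0 ≤ p * (r - ε) ^ (p - 1) := by
  have hs : 0 < r - ε := by linarith
  have hp0 : 0 < p := lt_of_lt_of_le one_pos hp
  positivity

lemma B_le (hp : 1 ≤ p) (hε0 : 0 < ε) (hεr : ε < r) :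
    Bc r p ε * (4 * ε) ≤ -(p * (r - ε) ^ (p - 1)) := by
  have hb := bern hp hε0 hεr
  have h4 : (0:ℝ) < ε := hε0
  rw [← mul_le_mul_iff_of_pos_right h4, mul_assoc]
  have : (4:ℝ) * ε * ε = 4 * ε ^ 2 := by ring
  rw [this, Bc_mul hε0]
  nlinarith [hb]

lemma B_nonpos (hp : 1 ≤ p) (hε0 : 0 < ε) (hεr : ε < r) : Bc r p ε ≤ 0 := by
  have h := B_le hp hε0 hεr
  have hq := q_nonneg hp hε0 hεr
  nlinarith [h, hq, hε0]

lemma A_nonpos (hp : 1 ≤ p) (hε0 : 0 < ε) (hεr : ε < r) : Ac r p ε ≤ 0 := by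
  have hB := B_le hp hε0 hεr
  have hq := q_nonneg hp hε0 hεr
  have h12 : (0:ℝ) < 12 * ε ^ 2 := by positivity
  rw [← mul_le_mul_iff_of_pos_right h12, zero_mul, Ac_mul hε0]
  nlinarith [hB, hε0]

-- value matching at r - ε
lemma match_val (hε0 : 0 < ε) :
    Ac r p ε * ((r - ε) - (r + ε)) ^ 3 + Bc r p ε * ((r - ε) - (r + ε)) ^ 2 + r ^ p
      = (r - ε) ^ p := by
  have hε : (ε:ℝ) ≠ 0 := ne_of_gt hε0
  unfold Ac Bc
  field_simp
  ring

-- derivative matching at r - ε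
lemma match_der (hε0 : 0 < ε) :
    3 * Ac r p ε * ((r - ε) - (r + ε)) ^ 2 + 2 * Bc r p ε * ((r - ε) - (r + ε))
      = p * (r - ε) ^ (p - 1) := by
  have hε : (ε:ℝ) ≠ 0 := ne_of_gt hε0
  unfold Ac Bc
  field_simp
  ring

end facts

section derivsec
variable {r p ε : ℝ}

noncomputable def Fder (r p ε γ ω t : ℝ) : ℝ :=
  if t ≤ r - ε then γ * (p * t ^ (p - 1)) + 2 * ω * t
  else if t ≤ r + ε then
    γ * (3 * Ac r p ε * (t - (r + ε)) ^ 2 + 2 * Bc r p ε * (t - (r + ε))) + 2 * ω * t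
  else 2 * ω * t

lemma hasDerivAt_phi1 (p γ ω : ℝ) {t : ℝ} (ht : t ≠ 0) :
    HasDerivAt (fun u : ℝ => γ * u ^ p + ω * u ^ 2) (γ * (p * t ^ (p - 1)) + 2 * ω * t) t := by
  have h1 := (Real.hasDerivAt_rpow_const (x := t) (p := p) (Or.inl ht)).const_mul γ
  have h2 := (hasDerivAt_pow 2 t).const_mul ω
  convert h1.add h2 using 1
  all_goals first | rfl | (simp; ring) | (push_cast; ring)

lemma hasDerivAt_phi2 (r p ε γ ω : ℝ) (t : ℝ) :
    HasDerivAt (fun u : ℝ =>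
        γ * (Ac r p ε * (u - (r + ε)) ^ 3 + Bc r p ε * (u - (r + ε)) ^ 2 + r ^ p) + ω * u ^ 2)
      (γ * (3 * Ac r p ε * (t - (r + ε)) ^ 2 + 2 * Bc r p ε * (t - (r + ε))) + 2 * ω * t) t := by
  have hu : HasDerivAt (fun u : ℝ => u - (r + ε)) 1 t := (hasDerivAt_id t).sub_const _
  have h3 := (hu.pow 3).const_mul (Ac r p ε)
  have h2 := (hu.pow 2).const_mul (Bc r p ε)
  have hq := (hasDerivAt_pow 2 t).const_mul ω
  convert (((h3.add h2).add_const (r ^ p)).const_mul γ).add hq using 1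
  all_goals first | rfl | (simp; ring) | (push_cast; ring)

lemma hasDerivAt_phi3 (c ω : ℝ) (t : ℝ) :
    HasDerivAt (fun u : ℝ => c + ω * u ^ 2) (2 * ω * t) t := by
  have hq := (hasDerivAt_pow 2 t).const_mul ω
  convert (hasDerivAt_const t c).add hq using 1
  all_goals first | rfl | (simp; ring) | (push_cast; ring)

end derivsec

lemma wpot_hasDeriv {r p ε : ℝ} (hr : 0 < r) (hp : 1 ≤ p) (hε0 : 0 < ε) (hεr : ε < r)
    (γ ω : ℝ) {t : ℝ} (ht : 0 < t) :
    HasDerivAt (fun u : ℝ => γ * Wpot r p ε u + ω * u ^ 2) (Fder r p ε γ ω t) t := by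
  have hs : 0 < r - ε := by linarith
  have hsR : r - ε < r + ε := by linarith
  have hR0 : 0 < r + ε := by linarith
  rcases lt_trichotomy t (r - ε) with h | h | h
  · -- t < r - ε
    have hev : (fun u : ℝ => γ * Wpot r p ε u + ω * u ^ 2)
        =ᶠ[𝓝 t] fun u : ℝ => γ * u ^ p + ω * u ^ 2 := by
      filter_upwards [Ioo_mem_nhds ht h] with u hu
      rw [Wpot_eq, abs_of_pos hu.1, if_pos hu.2.le]
    have hd := (hasDerivAt_phi1 p γ ω ht.ne').congr_of_eventuallyEq hev
    simpa [Fder, if_pos h.le] using hd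
  · -- t = r - ε
    subst h
    set d := γ * (p * (r - ε) ^ (p - 1)) + 2 * ω * (r - ε) with hd_def
    have hL : HasDerivWithinAt (fun u : ℝ => γ * Wpot r p ε u + ω * u ^ 2) d
        (Iic (r - ε)) (r - ε) := by
      refine ((hasDerivAt_phi1 p γ ω hs.ne').hasDerivWithinAt).congr_of_eventuallyEq ?_ ?_
      · filter_upwards [self_mem_nhdsWithin,
          mem_nhdsWithin_of_mem_nhds (Ioi_mem_nhds hs)] with u hu1 hu2
        rw [Wpot_eq, abs_of_pos (mem_Ioi.mp hu2), if_pos (mem_Iic.mp hu1)]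
      · rw [Wpot_eq, abs_of_pos hs, if_pos le_rfl]
    have hR : HasDerivWithinAt (fun u : ℝ => γ * Wpot r p ε u + ω * u ^ 2) d
        (Ici (r - ε)) (r - ε) := by
      have hgval : γ * Wpot r p ε (r - ε) + ω * (r - ε) ^ 2 =
          γ * (Ac r p ε * ((r - ε) - (r + ε)) ^ 3 + Bc r p ε * ((r - ε) - (r + ε)) ^ 2 + r ^ p)
            + ω * (r - ε) ^ 2 := by
        rw [Wpot_eq, abs_of_pos hs, if_pos le_rfl, match_val hε0]
      have he : γ * (3 * Ac r p ε * ((r - ε) - (r + ε)) ^ 2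
          + 2 * Bc r p ε * ((r - ε) - (r + ε))) + 2 * ω * (r - ε) = d := by
        rw [match_der hε0]
      rw [← he]
      refine ((hasDerivAt_phi2 r p ε γ ω (r - ε)).hasDerivWithinAt
          (s := Ici (r - ε))).congr_of_eventuallyEq ?_ hgval
      filter_upwards [self_mem_nhdsWithin,
        mem_nhdsWithin_of_mem_nhds (Iio_mem_nhds hsR)] with u hu1 hu2
      rcases eq_or_lt_of_le (mem_Ici.mp hu1) with he | hlt
      · rw [← he]; exact hgval
      · rw [Wpot_eq, abs_of_pos (hs.trans hlt), if_neg (not_le.mpr hlt),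
          if_pos (le_of_lt (mem_Iio.mp hu2))]
    have hu := hL.union hR
    rw [Iic_union_Ici, hasDerivWithinAt_univ] at hu
    simpa [Fder, if_pos le_rfl] using hu
  · -- t > r - ε
    rcases lt_trichotomy t (r + ε) with h2 | h2 | h2
    · -- r - ε < t < r + ε
      have hev : (fun u : ℝ => γ * Wpot r p ε u + ω * u ^ 2) =ᶠ[𝓝 t] fun u : ℝ =>
          γ * (Ac r p ε * (u - (r + ε)) ^ 3 + Bc r p ε * (u - (r + ε)) ^ 2 + r ^ p)
            + ω * u ^ 2 := by
        filter_upwards [Ioo_mem_nhds h h2] with u hu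
        rw [Wpot_eq, abs_of_pos (hs.trans hu.1), if_neg (not_le.mpr hu.1), if_pos hu.2.le]
      have hd := (hasDerivAt_phi2 r p ε γ ω t).congr_of_eventuallyEq hev
      simpa [Fder, if_neg (not_le.mpr h), if_pos h2.le] using hd
    · -- t = r + ε
      subst h2
      set d := 2 * ω * (r + ε) with hd_def
      have hgval : γ * Wpot r p ε (r + ε) + ω * (r + ε) ^ 2 =
          γ * (Ac r p ε * ((r + ε) - (r + ε)) ^ 3 + Bc r p ε * ((r + ε) - (r + ε)) ^ 2 + r ^ p)
            + ω * (r + ε) ^ 2 := by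
        rw [Wpot_eq, abs_of_pos hR0, if_neg (not_le.mpr hsR), if_pos le_rfl]
      have hL : HasDerivWithinAt (fun u : ℝ => γ * Wpot r p ε u + ω * u ^ 2) d
          (Iic (r + ε)) (r + ε) := by
        have he : γ * (3 * Ac r p ε * ((r + ε) - (r + ε)) ^ 2
            + 2 * Bc r p ε * ((r + ε) - (r + ε))) + 2 * ω * (r + ε) = d := by
          rw [hd_def]; ring
        rw [← he]
        refine ((hasDerivAt_phi2 r p ε γ ω (r + ε)).hasDerivWithinAt
            (s := Iic (r + ε))).congr_of_eventuallyEq ?_ hgval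
        filter_upwards [self_mem_nhdsWithin,
          mem_nhdsWithin_of_mem_nhds (Ioi_mem_nhds hsR)] with u hu1 hu2
        rw [Wpot_eq, abs_of_pos (hs.trans (mem_Ioi.mp hu2)), if_neg (not_le.mpr (mem_Ioi.mp hu2)),
          if_pos (mem_Iic.mp hu1)]
      have hR : HasDerivWithinAt (fun u : ℝ => γ * Wpot r p ε u + ω * u ^ 2) d
          (Ici (r + ε)) (r + ε) := by
        have hgval3 : γ * Wpot r p ε (r + ε) + ω * (r + ε) ^ 2 =
            γ * r ^ p + ω * (r + ε) ^ 2 := by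
          rw [hgval]; simp
        refine ((hasDerivAt_phi3 (γ * r ^ p) ω (r + ε)).hasDerivWithinAt
            (s := Ici (r + ε))).congr_of_eventuallyEq ?_ hgval3
        filter_upwards [self_mem_nhdsWithin] with u hu1
        rcases eq_or_lt_of_le (mem_Ici.mp hu1) with he | hlt
        · rw [← he]; exact hgval3
        · rw [Wpot_eq, abs_of_pos (hR0.trans hlt), if_neg (not_le.mpr (hsR.trans hlt)),
            if_neg (not_le.mpr hlt)]
      have hu := hL.union hR
      rw [Iic_union_Ici, hasDerivWithinAt_univ] at hu
      have hF : Fder r p ε γ ω (r + ε) = d := by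
        rw [Fder, if_neg (not_le.mpr hsR), if_pos le_rfl, hd_def]; ring
      rwa [hF]
    · -- t > r + ε
      have hev : (fun u : ℝ => γ * Wpot r p ε u + ω * u ^ 2)
          =ᶠ[𝓝 t] fun u : ℝ => γ * r ^ p + ω * u ^ 2 := by
        filter_upwards [Ioi_mem_nhds h2] with u hu
        rw [Wpot_eq, abs_of_pos (hR0.trans hu), if_neg (not_le.mpr (hsR.trans hu)),
          if_neg (not_le.mpr hu)]
      have hd := (hasDerivAt_phi3 (γ * r ^ p) ω t).congr_of_eventuallyEq hev
      have hF : Fder r p ε γ ω t = 2 * ω * t := by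
        rw [Fder, if_neg (not_le.mpr (lt_trans hsR h2)), if_neg (not_le.mpr h2)]
      rwa [hF]

lemma Fder_mono {r p ε γ ω : ℝ} (hr : 0 < r) (hp : 1 ≤ p) (hε0 : 0 < ε) (hεr : ε < r)
    (hγ : 0 < γ) (hωB : γ * -Bc r p ε ≤ ω) :
    MonotoneOn (Fder r p ε γ ω) (Ioi 0) := by
  have hs : 0 < r - ε := by linarith
  have hsR : r - ε < r + ε := by linarith
  have hB0 : Bc r p ε ≤ 0 := B_nonpos hp hε0 hεr
  have hA0 : Ac r p ε ≤ 0 := A_nonpos hp hε0 hεr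
  have hω0 : 0 ≤ ω := by nlinarith
  have hωB' : 0 ≤ ω + γ * Bc r p ε := by nlinarith
  have hm1 : ∀ x y : ℝ, 0 ≤ x → x ≤ y →
      γ * (p * x ^ (p - 1)) + 2 * ω * x ≤ γ * (p * y ^ (p - 1)) + 2 * ω * y := by
    intro x y hx hxy
    have h1 : x ^ (p - 1) ≤ y ^ (p - 1) :=
      Real.rpow_le_rpow hx hxy (by linarith)
    have hp0 : 0 < p := lt_of_lt_of_le one_pos hp
    nlinarith [mul_nonneg (mul_nonneg hγ.le hp0.le) (sub_nonneg.2 h1),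
      mul_nonneg hω0 (sub_nonneg.2 hxy)]
  have hm2 : ∀ x y : ℝ, x ≤ y → y ≤ r + ε →
      γ * (3 * Ac r p ε * (x - (r + ε)) ^ 2 + 2 * Bc r p ε * (x - (r + ε))) + 2 * ω * x ≤
      γ * (3 * Ac r p ε * (y - (r + ε)) ^ 2 + 2 * Bc r p ε * (y - (r + ε))) + 2 * ω * y := by
    intro x y hxy hyR
    nlinarith [mul_nonneg (sub_nonneg.2 hxy)
        (mul_nonneg (mul_nonneg hγ.le (neg_nonneg.2 hA0))
          (by linarith : (0:ℝ) ≤ 2 * (r + ε) - x - y)),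
      mul_nonneg (sub_nonneg.2 hxy) hωB']
  have hj1 : γ * (3 * Ac r p ε * ((r - ε) - (r + ε)) ^ 2
      + 2 * Bc r p ε * ((r - ε) - (r + ε))) + 2 * ω * (r - ε)
      = γ * (p * (r - ε) ^ (p - 1)) + 2 * ω * (r - ε) := by
    rw [match_der hε0]
  have hj2 : γ * (3 * Ac r p ε * ((r + ε) - (r + ε)) ^ 2
      + 2 * Bc r p ε * ((r + ε) - (r + ε))) + 2 * ω * (r + ε) = 2 * ω * (r + ε) := by ring
  intro x hx y hy hxy
  rcases le_or_gt x (r - ε) with hx1 | hx1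
  · rcases le_or_gt y (r - ε) with hy1 | hy1
    · simp only [Fder, if_pos hx1, if_pos hy1]
      exact hm1 x y (le_of_lt hx) hxy
    · rcases le_or_gt y (r + ε) with hy2 | hy2
      · simp only [Fder, if_pos hx1, if_neg (not_le.mpr hy1), if_pos hy2]
        calc γ * (p * x ^ (p - 1)) + 2 * ω * x
            ≤ γ * (p * (r - ε) ^ (p - 1)) + 2 * ω * (r - ε) := hm1 x _ (le_of_lt hx) hx1
          _ = _ := hj1.symm
          _ ≤ _ := hm2 _ y hy1.le hy2
      · simp only [Fder, if_pos hx1, if_neg (not_le.mpr hy1), if_neg (not_le.mpr hy2)]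
        calc γ * (p * x ^ (p - 1)) + 2 * ω * x
            ≤ γ * (p * (r - ε) ^ (p - 1)) + 2 * ω * (r - ε) := hm1 x _ (le_of_lt hx) hx1
          _ = _ := hj1.symm
          _ ≤ γ * (3 * Ac r p ε * ((r + ε) - (r + ε)) ^ 2
              + 2 * Bc r p ε * ((r + ε) - (r + ε))) + 2 * ω * (r + ε) := hm2 _ _ hsR.le le_rfl
          _ = 2 * ω * (r + ε) := hj2
          _ ≤ 2 * ω * y := by nlinarith
  · have hxy1 : ¬ y ≤ r - ε := not_le.mpr (lt_of_lt_of_le hx1 hxy)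
    rcases le_or_gt x (r + ε) with hx2 | hx2
    · rcases le_or_gt y (r + ε) with hy2 | hy2
      · simp only [Fder, if_neg (not_le.mpr hx1), if_pos hx2, if_neg hxy1, if_pos hy2]
        exact hm2 x y hxy hy2
      · simp only [Fder, if_neg (not_le.mpr hx1), if_pos hx2, if_neg hxy1,
          if_neg (not_le.mpr hy2)]
        calc γ * (3 * Ac r p ε * (x - (r + ε)) ^ 2
              + 2 * Bc r p ε * (x - (r + ε))) + 2 * ω * x
            ≤ γ * (3 * Ac r p ε * ((r + ε) - (r + ε)) ^ 2
              + 2 * Bc r p ε * ((r + ε) - (r + ε))) + 2 * ω * (r + ε) := hm2 _ _ hx2 le_rfl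
          _ = 2 * ω * (r + ε) := hj2
          _ ≤ 2 * ω * y := by nlinarith
    · have hy2 : ¬ y ≤ r + ε := not_le.mpr (lt_of_lt_of_le hx2 hxy)
      simp only [Fder, if_neg (not_le.mpr hx1), if_neg (not_le.mpr hx2), if_neg hxy1, if_neg hy2]
      nlinarith

lemma wpot_convex1d {r p ε γ ω : ℝ} (hr : 0 < r) (hp : 1 ≤ p) (hγ : 0 < γ)
    (hε0 : 0 < ε) (hεr : ε < r) (hωB : γ * -Bc r p ε ≤ ω) :
    ConvexOn ℝ univ (fun t : ℝ => γ * Wpot r p ε t + ω * t ^ 2) := by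
  have hs : 0 < r - ε := by linarith
  have hB0 : Bc r p ε ≤ 0 := B_nonpos hp hε0 hεr
  have hω0 : 0 ≤ ω := by nlinarith
  have hp0 : 0 < p := lt_of_lt_of_le one_pos hp
  set g : ℝ → ℝ := fun t => γ * Wpot r p ε t + ω * t ^ 2 with hg_def
  have hder : ∀ t ∈ Ioi (0:ℝ), HasDerivAt g (Fder r p ε γ ω t) t := fun t ht =>
    wpot_hasDeriv hr hp hε0 hεr γ ω (mem_Ioi.mp ht)
  have hcont : ContinuousOn g (Ici 0) := by
    intro t ht
    rcases eq_or_lt_of_le (mem_Ici.mp ht) with h0 | h0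
    · subst h0
      have hev : (fun u : ℝ => γ * |u| ^ p + ω * u ^ 2) =ᶠ[𝓝 (0:ℝ)] g := by
        filter_upwards [Ioo_mem_nhds (by linarith : -(r - ε) < (0:ℝ)) hs] with u hu
        have : |u| ≤ r - ε := by rw [abs_le]; constructor <;> [linarith [hu.1]; linarith [hu.2]]
        rw [hg_def]; simp only [Wpot_eq, if_pos this]
      have hc : ContinuousAt (fun u : ℝ => γ * |u| ^ p + ω * u ^ 2) 0 := by
        apply ContinuousAt.add
        · exact continuousAt_const.mul
            ((Real.continuousAt_rpow_const _ p (Or.inr hp0.le)).comp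
              continuous_abs.continuousAt)
        · exact (continuous_const.mul (continuous_pow 2)).continuousAt
      exact (hc.congr hev).continuousWithinAt
    · exact ((hder t h0).continuousAt).continuousWithinAt
  have hdiff : DifferentiableOn ℝ g (interior (Ici (0:ℝ))) := by
    rw [interior_Ici]
    exact fun t ht => ((hder t ht).differentiableAt).differentiableWithinAt
  have hmono : MonotoneOn (deriv g) (interior (Ici (0:ℝ))) := by
    rw [interior_Ici]
    intro x hx y hy hxy
    rw [(hder x hx).deriv, (hder y hy).deriv]
    exact Fder_mono hr hp hε0 hεr hγ hωB hx hy hxy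
  have hconv : ConvexOn ℝ (Ici 0) g := hmono.convexOn_of_deriv (convex_Ici 0) hcont hdiff
  have hF0 : ∀ t ∈ Ioi (0:ℝ), 0 ≤ Fder r p ε γ ω t := by
    have base : ∀ t : ℝ, 0 < t → t ≤ r - ε → 0 ≤ Fder r p ε γ ω t := by
      intro t ht h
      simp only [Fder, if_pos h]
      have h1 : (0:ℝ) ≤ t ^ (p - 1) := Real.rpow_nonneg ht.le _
      nlinarith [mul_nonneg (mul_nonneg hγ.le hp0.le) h1, mul_nonneg hω0 ht.le]
    intro t ht
    rcases le_or_gt t (r - ε) with h | h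
    · exact base t (mem_Ioi.mp ht) h
    · calc (0:ℝ) ≤ Fder r p ε γ ω (r - ε) := base _ hs le_rfl
        _ ≤ Fder r p ε γ ω t := Fder_mono hr hp hε0 hεr hγ hωB (mem_Ioi.mpr hs) ht h.le
  have hmon : MonotoneOn g (Ici 0) := by
    refine monotoneOn_of_deriv_nonneg (convex_Ici 0) hcont hdiff ?_
    intro x hx
    rw [interior_Ici] at hx
    rw [(hder x hx).deriv]
    exact hF0 x hx
  have himg : (abs '' (univ : Set ℝ)) = Ici 0 := by
    ext x
    constructor
    · rintro ⟨y, -, rfl⟩; exact abs_nonneg y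
    · intro hx; exact ⟨x, trivial, abs_of_nonneg hx⟩
  have habs : ConvexOn ℝ univ (abs : ℝ → ℝ) := by
    have := convexOn_univ_norm (E := ℝ)
    exact this
  have hrange : range (abs : ℝ → ℝ) = Ici 0 := by rw [← image_univ]; exact himg
  have hcomp : ConvexOn ℝ univ (g ∘ abs) :=
    ConvexOn.comp (by rw [image_univ, hrange]; exact hconv) habs
      (by rw [image_univ, hrange]; exact hmon)
  have : g ∘ abs = g := by
    funext t
    simp only [Function.comp_apply, hg_def]
    have h1 : Wpot r p ε |t| = Wpot r p ε t := by
      simp only [Wpot, abs_abs]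
    rw [h1, sq_abs]
  rwa [this] at hcomp

/-- With `B = p(r−ε)^{p−1}/(2ε) + 3((r−ε)^p − r^p)/(4ε²)`, for every
`ω ≥ γ|B|` the function `v ↦ J_p^ε(v) + ω‖v‖²` is convex; i.e. `J_p^ε` is
`ω`-semi-convex. -/
theorem statement11 (r p : ℝ) (hr : 0 < r) (hp : 1 ≤ p) (m : ℕ)
    {K : Type*} [NormedAddCommGroup K] [InnerProductSpace ℝ K] [FiniteDimensional ℝ K]
    (T : EuclideanSpace ℝ (Fin m) →ₗ[ℝ] K) (g : K) (γ ε : ℝ)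
    (hγ : 0 < γ) (hε0 : 0 < ε) (hεr : ε < r) (ω : ℝ)
    (hω : γ * |p * (r - ε) ^ (p - 1) / (2 * ε) +
        3 * ((r - ε) ^ p - r ^ p) / (4 * ε ^ 2)| ≤ ω) :
    ConvexOn ℝ Set.univ (fun v : EuclideanSpace ℝ (Fin m) =>
      (‖T v - g‖ ^ 2 + γ * ∑ i, Wpot r p ε (v i)) + ω * ‖v‖ ^ 2) := by
  have hB0 : Bc r p ε ≤ 0 := B_nonpos hp hε0 hεr
  have hωB : γ * -Bc r p ε ≤ ω := by
    have h1 : γ * |Bc r p ε| ≤ ω := hω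
    rwa [abs_of_nonpos hB0] at h1
  have key := wpot_convex1d hr hp hγ hε0 hεr hωB
  have hfun : (fun v : EuclideanSpace ℝ (Fin m) =>
      (‖T v - g‖ ^ 2 + γ * ∑ i, Wpot r p ε (v i)) + ω * ‖v‖ ^ 2)
      = fun v : EuclideanSpace ℝ (Fin m) =>
        ‖T v - g‖ ^ 2 + ∑ i, (γ * Wpot r p ε (v i) + ω * (v i) ^ 2) := by
    funext v
    have hn : ‖v‖ ^ 2 = ∑ i, (v i) ^ 2 := by
      rw [PiLp.norm_sq_eq_of_L2]
      simp [Real.norm_eq_abs, sq_abs]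
    rw [hn, Finset.sum_add_distrib, ← Finset.mul_sum, ← Finset.mul_sum]
    ring
  rw [hfun]
  apply ConvexOn.add
  · refine ⟨convex_univ, ?_⟩
    intro x _ y _ a b ha hb hab
    have hTx : T (a • x + b • y) - g = a • (T x - g) + b • (T y - g) := by
      have hms : a • (T x - g) + b • (T y - g) = a • T x + b • T y - (a + b) • g := by
        module
      rw [map_add, map_smul, map_smul, hms, hab, one_smul]
    have h1 : ‖T (a • x + b • y) - g‖ ≤ a * ‖T x - g‖ + b * ‖T y - g‖ := by
      rw [hTx]
      refine (norm_add_le _ _).trans ?_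
      rw [norm_smul, norm_smul, Real.norm_eq_abs, Real.norm_eq_abs,
        abs_of_nonneg ha, abs_of_nonneg hb]
    have h2 : ‖T (a • x + b • y) - g‖ ^ 2 ≤ (a * ‖T x - g‖ + b * ‖T y - g‖) ^ 2 :=
      pow_le_pow_left₀ (norm_nonneg _) h1 2
    have h3 : (a * ‖T x - g‖ + b * ‖T y - g‖) ^ 2 ≤ a * ‖T x - g‖ ^ 2 + b * ‖T y - g‖ ^ 2 := by
      nlinarith [sq_nonneg (‖T x - g‖ - ‖T y - g‖), mul_nonneg ha hb,
        norm_nonneg (T x - g), norm_nonneg (T y - g)]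
    simp only [smul_eq_mul]
    linarith
  · refine ⟨convex_univ, ?_⟩
    intro x _ y _ a b ha hb hab
    simp only [smul_eq_mul]
    have happ : ∀ i, (a • x + b • y) i = a * x i + b * y i := fun i => rfl
    calc ∑ i, (γ * Wpot r p ε ((a • x + b • y) i) + ω * ((a • x + b • y) i) ^ 2)
        ≤ ∑ i, (a * (γ * Wpot r p ε (x i) + ω * (x i) ^ 2)
            + b * (γ * Wpot r p ε (y i) + ω * (y i) ^ 2)) := by
          apply Finset.sum_le_sum
          intro i _
          have h := key.2 (mem_univ (x i)) (mem_univ (y i)) ha hb hab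
          simpa [happ i, smul_eq_mul] using h
      _ = a * ∑ i, (γ * Wpot r p ε (x i) + ω * (x i) ^ 2)
            + b * ∑ i, (γ * Wpot r p ε (y i) + ω * (y i) ^ 2) := by
          rw [Finset.sum_add_distrib, ← Finset.mul_sum, ← Finset.mul_sum]
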